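/- Define g(Θ) = (1/⟨k⟩)∑_{k'} k'P(k')·α_{k'} k' Θ/(γ₂ + α_{k'} k' Θ) for Θ ∈ [0,1], with α_{k'} > 0, γ₂ > 0. Then g(0) = 0, g is strictly increasing and strictly concave on (0,1), and g(1) < 1; hence if g'(0) = ⟨α_k k²⟩/(γ₂⟨k⟩) > 1 there exists a unique Θ* ∈ (0,1) with g(Θ*) = Θ*. -/

import Mathlib

open Set Finset

lemma endemic_inv_combo {u v t s : ℝ} (hu : 0 < u) (hv : 0 < v) (huv : u ≠ v)
    (ht : 0 < t) (hs : 0 < s) (hts : t + s = 1) :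
    (t*u+s*v)⁻¹ < t*u⁻¹+s*v⁻¹ := by
  have hz : 0 < t*u+s*v := by positivity
  have key : t*u⁻¹+s*v⁻¹ - (t*u+s*v)⁻¹ = t*s*(u-v)^2/(u*v*(t*u+s*v)) := by
    field_simp
    linear_combination v*u*(t+s+1)*hts
  have hpos : 0 < t*s*(u-v)^2/(u*v*(t*u+s*v)) := by
    have h2 : 0 < (u-v)^2 := by
      have := sub_ne_zero.mpr huv
      positivity
    exact div_pos (mul_pos (mul_pos ht hs) h2) (by positivity)
  linarith

lemma endemic_frac_strict {a γ t s x y : ℝ} (ha : 0 < a) (hγ : 0 < γ) (hx : 0 ≤ x) (hy : 0 ≤ y)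
    (hxy : x ≠ y) (ht : 0 < t) (hs : 0 < s) (hts : t + s = 1) :
    t*(a*x/(γ+a*x)) + s*(a*y/(γ+a*y)) < a*(t*x+s*y)/(γ+a*(t*x+s*y)) := by
  set u := γ + a*x with hu
  set v := γ + a*y with hv
  have hu0 : 0 < u := by positivity
  have hv0 : 0 < v := by positivity
  have huv : u ≠ v := by
    simp only [hu, hv]
    intro h
    exact hxy (mul_left_cancel₀ (ne_of_gt ha) (by linarith))
  have hz : γ + a*(t*x+s*y) = t*u + s*v := by simp only [hu, hv]; ring_nf; linear_combination γ * hts.symm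
  have key := endemic_inv_combo hu0 hv0 huv ht hs hts
  have hax : a*x = u - γ := by rw [hu]; ring
  have hay : a*y = v - γ := by rw [hv]; ring
  have haz : a*(t*x+s*y) = (t*u+s*v) - γ := by linarith [hz]
  rw [hz, haz, hax, hay]
  have htu : 0 < t*u+s*v := by positivity
  have e1 : t*((u-γ)/u) = t - γ*(t*u⁻¹) := by field_simp
  have e2 : s*((v-γ)/v) = s - γ*(s*v⁻¹) := by field_simp
  have e3 : (t*u+s*v-γ)/(t*u+s*v) = 1 - γ*(t*u+s*v)⁻¹ := by field_simp
  rw [e1, e2, e3]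
  have := mul_lt_mul_of_pos_left key hγ
  linarith

lemma endemic_term_strictConcave {a c γ : ℝ} (ha : 0 < a) (hc : 0 < c) (hγ : 0 < γ) :
    StrictConcaveOn ℝ (Icc (0:ℝ) 1) (fun θ => c * (a * θ / (γ + a * θ))) := by
  refine ⟨convex_Icc 0 1, ?_⟩
  intro x hx y hy hxy t s ht hs hts
  simp only [smul_eq_mul]
  have key := endemic_frac_strict ha hγ hx.1 hy.1 hxy ht hs hts
  calc t*(c*(a*x/(γ+a*x))) + s*(c*(a*y/(γ+a*y)))
      = c*(t*(a*x/(γ+a*x)) + s*(a*y/(γ+a*y))) := by ring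
    _ < c*(a*(t*x+s*y)/(γ+a*(t*x+s*y))) := mul_lt_mul_of_pos_left key hc

lemma endemic_sum_strictConcave {ι : Type*} {f : ι → ℝ → ℝ} (s : Finset ι) (hs : s.Nonempty)
    (h : ∀ i ∈ s, StrictConcaveOn ℝ (Icc (0:ℝ) 1) (f i)) :
    StrictConcaveOn ℝ (Icc (0:ℝ) 1) (fun θ => ∑ i ∈ s, f i θ) := by
  induction hs using Finset.Nonempty.cons_induction with
  | singleton i => simpa using h i (by simp)
  | cons i s his hs ih =>
      simp only [Finset.sum_cons]
      exact (h i (Finset.mem_cons_self i s)).add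
        (ih fun j hj => h j (Finset.mem_cons_of_mem hj))

lemma endemic_div_strictConcave {K : ℝ} (hK : 0 < K) {s : Set ℝ} {f : ℝ → ℝ}
    (hf : StrictConcaveOn ℝ s f) : StrictConcaveOn ℝ s (fun x => f x / K) := by
  refine ⟨hf.1, fun x hx y hy hxy t u ht hu htu => ?_⟩
  have key := hf.2 hx hy hxy ht hu htu
  simp only [smul_eq_mul] at key ⊢
  calc t*(f x / K) + u*(f y / K) = (t * f x + u * f y)/K := by ring
    _ < f (t*x+u*y)/K := by gcongr

/-- The endemic self-consistency map
`g(Θ) = (1/⟨k⟩) ∑ k' P(k') α_{k'} k' Θ/(γ₂ + α_{k'} k' Θ)` satisfies `g 0 = 0`, is strictly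
increasing and strictly concave on `(0,1)`, and `g 1 < 1`; hence if
`g'(0) = ⟨α k²⟩/(γ₂ ⟨k⟩) > 1` there is a unique fixed point `Θ* ∈ (0,1)` with `g Θ* = Θ*`. -/
theorem endemic_fixed_point (n : ℕ) (hn : 0 < n)
    (k : Fin n → ℝ) (hk : ∀ i, 0 < k i)
    (P : Fin n → ℝ) (hP : ∀ i, 0 < P i) (hPsum : ∑ i, P i = 1)
    (α : Fin n → ℝ) (hα : ∀ i, 0 < α i) (γ₂ : ℝ) (hγ₂ : 0 < γ₂)
    (g : ℝ → ℝ)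
    (hg : ∀ Θ : ℝ, g Θ =
      (∑ i, k i * P i * (α i * k i * Θ / (γ₂ + α i * k i * Θ))) / (∑ i, k i * P i)) :
    g 0 = 0 ∧
      StrictMonoOn g (Set.Ioo (0 : ℝ) 1) ∧
      StrictConcaveOn ℝ (Set.Ioo (0 : ℝ) 1) g ∧
      g 1 < 1 ∧
      ((∑ i, α i * (k i) ^ 2 * P i) / (γ₂ * ∑ i, k i * P i) > 1 →
        ∃! Θ : ℝ, Θ ∈ Set.Ioo (0 : ℝ) 1 ∧ g Θ = Θ) := by
  have hinst : Nonempty (Fin n) := ⟨⟨0, hn⟩⟩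
  have hK : 0 < ∑ i, k i * P i :=
    Finset.sum_pos (fun i _ => mul_pos (hk i) (hP i)) Finset.univ_nonempty
  set G : ℝ → ℝ :=
    fun Θ => (∑ i, k i * P i * (α i * k i * Θ / (γ₂ + α i * k i * Θ))) / (∑ i, k i * P i)
    with hGdef
  have hgeq : g = G := by funext Θ; rw [hg, hGdef]
  subst hgeq
  have ha : ∀ i, 0 < α i * k i := fun i => mul_pos (hα i) (hk i)
  have hc : ∀ i, 0 < k i * P i := fun i => mul_pos (hk i) (hP i)
  -- g 0 = 0
  have hG0 : G 0 = 0 := by simp [hGdef]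
  -- strict concavity on Icc 0 1
  have hcc : StrictConcaveOn ℝ (Icc (0:ℝ) 1) G := by
    rw [hGdef]
    exact endemic_div_strictConcave hK
      (endemic_sum_strictConcave Finset.univ Finset.univ_nonempty
        (fun i _ => endemic_term_strictConcave (ha i) (hc i) hγ₂))
  -- strict monotonicity
  have hmono : StrictMonoOn G (Set.Ioo (0:ℝ) 1) := by
    intro x hx y hy hxy
    rw [hGdef]
    have hterm : ∀ i ∈ Finset.univ, k i * P i * (α i * k i * x / (γ₂ + α i * k i * x)) <
        k i * P i * (α i * k i * y / (γ₂ + α i * k i * y)) := by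
      intro i _
      apply mul_lt_mul_of_pos_left _ (hc i)
      have hdx : 0 < γ₂ + α i * k i * x := by
        have := mul_nonneg (ha i).le hx.1.le; linarith
      have hdy : 0 < γ₂ + α i * k i * y := by
        have := mul_nonneg (ha i).le (hx.1.trans hxy).le; linarith
      rw [div_lt_div_iff₀ hdx hdy]
      nlinarith [mul_lt_mul_of_pos_left hxy (mul_pos (ha i) hγ₂)]
    exact (div_lt_div_iff_of_pos_right hK).mpr (Finset.sum_lt_sum_of_nonempty Finset.univ_nonempty hterm)
  -- g 1 < 1
  have hG1 : G 1 < 1 := by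
    rw [hGdef, div_lt_one hK]
    apply Finset.sum_lt_sum_of_nonempty Finset.univ_nonempty
    intro i _
    have hd : 0 < γ₂ + α i * k i * 1 := by have := ha i; linarith
    have hfrac : α i * k i * 1 / (γ₂ + α i * k i * 1) < 1 := by
      rw [div_lt_one hd]; linarith [hγ₂]
    calc k i * P i * (α i * k i * 1 / (γ₂ + α i * k i * 1)) < k i * P i * 1 :=
          mul_lt_mul_of_pos_left hfrac (hc i)
      _ = k i * P i := mul_one _
  refine ⟨hG0, hmono, hcc.subset Set.Ioo_subset_Icc_self (convex_Ioo 0 1), hG1, ?_⟩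
  -- fixed point part
  intro hD
  set A := ∑ i, k i * P i * (α i * k i) with hAdef
  set B := ∑ i, k i * P i * (α i * k i) ^ 2 with hBdef
  have hAeq : (∑ i, α i * (k i) ^ 2 * P i) = A := by
    rw [hAdef]; apply Finset.sum_congr rfl; intro i _; ring
  have hB : 0 < B :=
    Finset.sum_pos (fun i _ => mul_pos (hc i) (pow_pos (ha i) 2)) Finset.univ_nonempty
  set D := A / (γ₂ * ∑ i, k i * P i) with hDdef
  set C := B / (γ₂ ^ 2 * ∑ i, k i * P i) with hCdef
  have hD1 : 1 < D := by rw [hDdef, ← hAeq]; exact hD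
  have hC : 0 < C := div_pos hB (by positivity)
  -- lower bound for G on [0,∞)
  have hlow : ∀ θ : ℝ, 0 ≤ θ → θ * D - θ ^ 2 * C ≤ G θ := by
    intro θ hθ
    have hterm : ∀ i ∈ Finset.univ,
        k i * P i * (α i * k i * θ / γ₂ - (α i * k i * θ) ^ 2 / γ₂ ^ 2) ≤
        k i * P i * (α i * k i * θ / (γ₂ + α i * k i * θ)) := by
      intro i _
      apply mul_le_mul_of_nonneg_left _ (hc i).le
      have hd : 0 < γ₂ + α i * k i * θ := by
        have := mul_nonneg (ha i).le hθ; linarith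
      have hid : α i * k i * θ / (γ₂ + α i * k i * θ) -
          (α i * k i * θ / γ₂ - (α i * k i * θ) ^ 2 / γ₂ ^ 2) =
          (α i * k i * θ) ^ 3 / (γ₂ ^ 2 * (γ₂ + α i * k i * θ)) := by
        field_simp
        ring
      have hpos : 0 ≤ (α i * k i * θ) ^ 3 / (γ₂ ^ 2 * (γ₂ + α i * k i * θ)) := by
        have h1 : 0 ≤ α i * k i * θ := mul_nonneg (ha i).le hθ
        positivity
      linarith [hid ▸ hpos]
    have hsum := Finset.sum_le_sum hterm
    have hsum_eq : (∑ i, k i * P i * (α i * k i * θ / γ₂ - (α i * k i * θ) ^ 2 / γ₂ ^ 2)) =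
        θ * (A / γ₂) - θ ^ 2 * (B / γ₂ ^ 2) := by
      rw [hAdef, hBdef, Finset.sum_div, Finset.sum_div, Finset.mul_sum, Finset.mul_sum,
        ← Finset.sum_sub_distrib]
      apply Finset.sum_congr rfl; intro i _; ring
    rw [hsum_eq] at hsum
    rw [hGdef]
    have expand : θ * D - θ ^ 2 * C = (θ * (A / γ₂) - θ ^ 2 * (B / γ₂ ^ 2)) / (∑ i, k i * P i) := by
      rw [hDdef, hCdef]
      field_simp
    rw [expand]
    exact (div_le_div_iff_of_pos_right hK).mpr hsum
  -- choose a small point where G θ > θ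
  set θ₀ := min ((D - 1) / (2 * C)) (1 / 2) with hθ₀def
  have hθ₀pos : 0 < θ₀ := lt_min (div_pos (by linarith) (by positivity)) (by norm_num)
  have hθ₀half : θ₀ ≤ 1 / 2 := min_le_right _ _
  have hθ₀1 : θ₀ ≤ 1 := by linarith
  have hθ₀C : θ₀ * C ≤ (D - 1) / 2 := by
    have h1 : θ₀ ≤ (D - 1) / (2 * C) := min_le_left _ _
    calc θ₀ * C ≤ (D - 1) / (2 * C) * C := by gcongr
      _ = (D - 1) / 2 := by field_simp
  have hstrict : θ₀ < G θ₀ := by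
    have := hlow θ₀ hθ₀pos.le
    nlinarith
  -- continuity of G - id on [0,1]
  have hGcont : ContinuousOn G (Icc (0:ℝ) 1) := by
    rw [hGdef]
    apply ContinuousOn.div_const
    apply continuousOn_finset_sum
    intro i _
    apply ContinuousOn.mul continuousOn_const
    apply ContinuousOn.div
    · fun_prop
    · fun_prop
    · intro θ hθ
      have h1 : 0 ≤ α i * k i * θ := mul_nonneg (ha i).le hθ.1
      have : 0 < γ₂ + α i * k i * θ := by linarith
      exact this.ne'
  have hcontsub : ContinuousOn (fun θ => G θ - θ) (Icc θ₀ 1) :=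
    (hGcont.sub continuousOn_id).mono (Icc_subset_Icc hθ₀pos.le le_rfl)
  -- IVT
  have hivt := intermediate_value_Icc' hθ₀1 hcontsub
  have h0mem : (0:ℝ) ∈ Icc (G 1 - 1) (G θ₀ - θ₀) := ⟨by linarith, by linarith⟩
  obtain ⟨Θ, hΘmem, hΘeq⟩ := hivt h0mem
  have hΘfix : G Θ = Θ := by
    have : G Θ - Θ = 0 := hΘeq
    linarith
  have hΘIoo : Θ ∈ Set.Ioo (0:ℝ) 1 := by
    refine ⟨lt_of_lt_of_le hθ₀pos hΘmem.1, lt_of_le_of_ne hΘmem.2 ?_⟩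
    intro h
    rw [h] at hΘfix
    linarith
  -- uniqueness via strict concavity of G - id
  have hconc : StrictConcaveOn ℝ (Icc (0:ℝ) 1) (fun θ => G θ - θ) :=
    hcc.sub_convexOn (convexOn_id (convex_Icc 0 1))
  have key : ∀ x y : ℝ, x ∈ Set.Ioo (0:ℝ) 1 → y ∈ Set.Ioo (0:ℝ) 1 → x < y →
      G x = x → G y = y → False := by
    intro x y hx hy hlt hfx hfy
    have hymem : y ∈ Icc (0:ℝ) 1 := ⟨hy.1.le, hy.2.le⟩
    have h0m : (0:ℝ) ∈ Icc (0:ℝ) 1 := by norm_num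
    have hyne : (0:ℝ) ≠ y := ne_of_lt hy.1
    have hy0 : 0 < y := hy.1
    have ht : 0 < 1 - x / y := by
      have : x / y < 1 := (div_lt_one hy0).mpr hlt
      linarith
    have hs : 0 < x / y := div_pos hx.1 hy0
    have hts : (1 - x / y) + x / y = 1 := by ring
    have hcombo := hconc.2 h0m hymem hyne ht hs hts
    simp only [smul_eq_mul] at hcombo
    have harg : (1 - x / y) * (0:ℝ) + (x / y) * y = x := by
      field_simp
      ring
    rw [harg] at hcombo
    rw [hG0, hfx, hfy] at hcombo
    simp at hcombo
  refine ⟨Θ, ⟨hΘIoo, hΘfix⟩, ?_⟩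
  rintro b ⟨hbIoo, hbfix⟩
  rcases lt_trichotomy b Θ with h | h | h
  · exact absurd (key b Θ hbIoo hΘIoo h hbfix hΘfix) not_false
  · exact h
  · exact absurd (key Θ b hΘIoo hbIoo h hΘfix hbfix) not_false
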